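/- The Schröder path partition function satisfies $Z_{(i,0)\to(0,j)} = z_j(q^{2i})$ where $z_j(t) = \sum_{k=0}^{j} \gamma^k q^{k^2} \begin{bmatrix} j \\ k \end{bmatrix}_{q^2} \prod_{s=1}^{j} \frac{t q^{2(s-k)} - 1}{q^{2s}-1}$ is a polynomial of degree $j$ in $t$; here $\begin{bmatrix} j \\ k \end{bmatrix}_{q^2}$ is the $q^2$-binomial coefficient. -/

import Mathlib

/-- A step of a Schröder path: up `(0,1)`, left `(-1,0)`, or diagonal `(-1,1)`. -/
inductive SStep
  | up
  | left
  | diag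
deriving DecidableEq

instance : Fintype SStep :=
  ⟨{SStep.up, SStep.left, SStep.diag}, by intro s; cases s <;> decide⟩

/-- The result of taking a step from a given position. -/
def stepMove : ℤ × ℤ → SStep → ℤ × ℤ
  | (x, y), SStep.up => (x, y + 1)
  | (x, y), SStep.left => (x - 1, y)
  | (x, y), SStep.diag => (x - 1, y + 1)

/-- Endpoint of a walk starting at `p` and taking the steps in the list. -/
def endPos : ℤ × ℤ → List SStep → ℤ × ℤ
  | p, [] => p
  | p, s :: rest => endPos (stepMove p s) rest

/-- The area to the left of the path, `∑ (x_s + x_{s+1}) (y_{s+1} - y_s)`: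
an up step from `(x,y)` contributes `2x`, a diagonal step `2x - 1`, a left step `0`. -/
def areaOf : ℤ × ℤ → List SStep → ℤ
  | _, [] => 0
  | (x, y), SStep.up :: rest => 2 * x + areaOf (x, y + 1) rest
  | (x, y), SStep.left :: rest => areaOf (x - 1, y) rest
  | (x, y), SStep.diag :: rest => (2 * x - 1) + areaOf (x - 1, y + 1) rest

/-- All lists of steps of length `n`. -/
def allLists : ℕ → Finset (List SStep)
  | 0 => {[]}
  | n + 1 => Finset.univ.biUnion fun s : SStep => (allLists n).image fun l => s :: l

/-- The (finite) set of Schröder paths from `(i,0)` to `(0,j)`, encoded as their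
lists of steps read from the starting point `(i,0)`. -/
def pathFinset (i j : ℕ) : Finset (List SStep) :=
  ((Finset.range (i + j + 1)).biUnion allLists).filter
    fun p => endPos ((i : ℤ), 0) p = (0, (j : ℤ))

/-- Number of diagonal steps of a path. -/
def diagCount (p : List SStep) : ℕ := p.count SStep.diag

/-- The partition function `Z_{(i,0)→(0,j)} = ∑_p γ^{k(p)} q^{A(p)}` of weighted
Schröder paths from `(i,0)` to `(0,j)`. -/
def Zpf {R : Type*} [CommRing R] (γ q : R) (i j : ℕ) : R :=
  ∑ p ∈ pathFinset i j, γ ^ diagCount p * q ^ (areaOf ((i : ℤ), 0) p).toNat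
/-- The `q²`-binomial coefficient `[j; k]_{q²}`. -/
noncomputable def qBinom (q : ℝ) (j k : ℕ) : ℝ :=
  (∏ s ∈ Finset.Icc 1 j, (q ^ (2 * s) - 1)) /
    ((∏ s ∈ Finset.Icc 1 k, (q ^ (2 * s) - 1)) * ∏ s ∈ Finset.Icc 1 (j - k), (q ^ (2 * s) - 1))

/-- The polynomial `z_j(t) = ∑_{k=0}^j γ^k q^{k²} [j;k]_{q²} ∏_{s=1}^j (t q^{2(s-k)}-1)/(q^{2s}-1)`. -/
noncomputable def zFun (γ q : ℝ) (j : ℕ) (t : ℝ) : ℝ :=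
  ∑ k ∈ Finset.range (j + 1),
    γ ^ k * q ^ (k ^ 2) * qBinom q j k *
      ∏ s ∈ Finset.Icc 1 j, (t * q ^ (2 * s) / q ^ (2 * k) - 1) / (q ^ (2 * s) - 1)

/-- number of steps moving left -/
def nxc (l : List SStep) : ℕ := l.count SStep.left + l.count SStep.diag
/-- number of steps moving up -/
def nyc (l : List SStep) : ℕ := l.count SStep.up + l.count SStep.diag

lemma endPos_eq (l : List SStep) : ∀ x y : ℤ, endPos (x, y) l = (x - nxc l, y + nyc l) := by
  induction l with
  | nil => intro x y; simp [endPos, nxc, nyc]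
  | cons s r ih =>
    intro x y
    cases s <;> simp [endPos, stepMove, nxc, nyc, List.count_cons, ih, Prod.ext_iff] <;>
      push_cast <;> ring_nf <;> simp

lemma length_eq_counts (l : List SStep) :
    l.length = l.count SStep.up + l.count SStep.left + l.count SStep.diag := by
  induction l with
  | nil => simp
  | cons s r ih => cases s <;> simp [List.count_cons, ih] <;> omega

lemma mem_allLists {l : List SStep} {n : ℕ} : l ∈ allLists n ↔ l.length = n := by
  induction n generalizing l with
  | zero => simp [allLists, List.length_eq_zero_iff]
  | succ n ih =>
    simp only [allLists, Finset.mem_biUnion, Finset.mem_univ, Finset.mem_image, true_and]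
    constructor
    · rintro ⟨s, l', hl', rfl⟩; simp [ih.1 hl']
    · intro hl
      cases l with
      | nil => simp at hl
      | cons s r => exact ⟨s, r, ih.2 (by simpa using hl), rfl⟩

lemma mem_pathFinset {p : List SStep} {i j : ℕ} :
    p ∈ pathFinset i j ↔ nxc p = i ∧ nyc p = j := by
  rw [pathFinset, Finset.mem_filter, endPos_eq]
  simp only [Finset.mem_biUnion, Finset.mem_range, mem_allLists, Prod.ext_iff]
  constructor
  · rintro ⟨-, h1, h2⟩
    constructor
    · omega
    · exact_mod_cast by omega
  · rintro ⟨h1, h2⟩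
    refine ⟨⟨p.length, ?_, rfl⟩, ?_, ?_⟩
    · have := length_eq_counts p
      simp [nxc, nyc] at h1 h2
      omega
    · rw [h1]; ring
    · rw [h2]; ring
lemma areaOf_y_indep (l : List SStep) : ∀ x y y' : ℤ, areaOf (x, y) l = areaOf (x, y') l := by
  induction l with
  | nil => intros; rfl
  | cons s r ih => intro x y y'; cases s <;> simp [areaOf, ih _ (y+1) (y'+1), ih _ y y']

lemma areaOf_nonneg (l : List SStep) : ∀ x y : ℤ, (nxc l : ℤ) ≤ x → 0 ≤ areaOf (x, y) l := by
  induction l with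
  | nil => intros; simp [areaOf]
  | cons s r ih =>
    intro x y h
    cases s <;> simp only [areaOf, nxc, List.count_cons] at h ⊢
    · have h' : (nxc r : ℤ) ≤ x := by simp [nxc] at h ⊢; omega
      have := ih x (y+1) h'
      have hx : (0:ℤ) ≤ x := le_trans (Int.natCast_nonneg _) h'
      omega
    · exact ih (x-1) y (by simp [nxc] at h ⊢; omega)
    · have := ih (x-1) (y+1) (by simp [nxc] at h ⊢; omega)
      have hx : (1:ℤ) ≤ x := by simp [nxc] at h; omega
      omega

lemma areaOf_replicate_left (n : ℕ) : ∀ x y : ℤ, areaOf (x, y) (List.replicate n SStep.left) = 0 := by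
  induction n with
  | zero => intros; rfl
  | succ n ih => intro x y; simp [List.replicate, areaOf, ih]

lemma areaOf_replicate_up (n : ℕ) : ∀ y : ℤ, areaOf (0, y) (List.replicate n SStep.up) = 0 := by
  induction n with
  | zero => intros; rfl
  | succ n ih => intro y; simp [List.replicate, areaOf, ih]

lemma pathFinset_right_zero (i : ℕ) : pathFinset i 0 = {List.replicate i SStep.left} := by
  ext p
  simp only [mem_pathFinset, Finset.mem_singleton]
  constructor
  · rintro ⟨h1, h2⟩
    simp [nxc, nyc] at h1 h2
    have : p.count SStep.left = p.length := by rw [length_eq_counts]; omega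
    rw [List.count_eq_length] at this
    have hl : p.length = i := by rw [length_eq_counts]; omega
    rw [← hl]
    exact List.eq_replicate_of_mem (fun b hb => (this b hb).symm)
  · rintro rfl
    simp [nxc, nyc, List.count_replicate]

lemma pathFinset_left_zero (j : ℕ) : pathFinset 0 j = {List.replicate j SStep.up} := by
  ext p
  simp only [mem_pathFinset, Finset.mem_singleton]
  constructor
  · rintro ⟨h1, h2⟩
    simp [nxc, nyc] at h1 h2
    have : p.count SStep.up = p.length := by rw [length_eq_counts]; omega
    rw [List.count_eq_length] at this
    have hl : p.length = j := by rw [length_eq_counts]; omega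
    rw [← hl]
    exact List.eq_replicate_of_mem (fun b hb => (this b hb).symm)
  · rintro rfl
    simp [nxc, nyc, List.count_replicate]

lemma Zpf_right_zero {R : Type*} [CommRing R] (γ q : R) (i : ℕ) : Zpf γ q i 0 = 1 := by
  simp [Zpf, pathFinset_right_zero, diagCount, List.count_replicate, areaOf_replicate_left]

lemma Zpf_left_zero {R : Type*} [CommRing R] (γ q : R) (j : ℕ) : Zpf γ q 0 j = 1 := by
  simp only [Zpf, pathFinset_left_zero, Finset.sum_singleton, diagCount,
    List.count_replicate, Nat.cast_zero]
  rw [areaOf_replicate_up]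
  simp
lemma nxc_cons (s : SStep) (r : List SStep) :
    nxc (s :: r) = nxc r + (if s = SStep.up then 0 else 1) := by
  cases s <;> simp [nxc, List.count_cons] <;> omega

lemma nyc_cons (s : SStep) (r : List SStep) :
    nyc (s :: r) = nyc r + (if s = SStep.left then 0 else 1) := by
  cases s <;> simp [nyc, List.count_cons] <;> omega

lemma pathFinset_succ_succ (i j : ℕ) :
    pathFinset (i+1) (j+1) =
      ((pathFinset (i+1) j).image (SStep.up :: ·)) ∪
      ((pathFinset i (j+1)).image (SStep.left :: ·)) ∪
      ((pathFinset i j).image (SStep.diag :: ·)) := by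
  ext p
  simp only [Finset.mem_union, Finset.mem_image, mem_pathFinset]
  constructor
  · rintro ⟨h1, h2⟩
    cases p with
    | nil => simp [nxc] at h1
    | cons s r =>
      cases s
      · exact Or.inl (Or.inl ⟨r, ⟨by simpa [nxc_cons] using h1, by simpa [nyc_cons] using h2⟩, rfl⟩)
      · exact Or.inl (Or.inr ⟨r, ⟨by simpa [nxc_cons] using h1, by simpa [nyc_cons] using h2⟩, rfl⟩)
      · exact Or.inr ⟨r, ⟨by simpa [nxc_cons] using h1, by simpa [nyc_cons] using h2⟩, rfl⟩
  · rintro ((⟨r, ⟨h1, h2⟩, rfl⟩ | ⟨r, ⟨h1, h2⟩, rfl⟩) | ⟨r, ⟨h1, h2⟩, rfl⟩) <;>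
      simp [nxc_cons, nyc_cons, h1, h2]

lemma Zpf_rec {R : Type*} [CommRing R] (γ q : R) (i j : ℕ) :
    Zpf γ q (i+1) (j+1) =
      q ^ (2*(i+1)) * Zpf γ q (i+1) j + Zpf γ q i (j+1) + γ * q ^ (2*i+1) * Zpf γ q i j := by
  have hinj : ∀ s : SStep, Function.Injective (s :: · : List SStep → List SStep) := by
    intro s a b h; simpa using h
  have hdisj1 : Disjoint ((pathFinset (i+1) j).image (SStep.up :: ·))
      ((pathFinset i (j+1)).image (SStep.left :: ·)) := by
    simp only [Finset.disjoint_left, Finset.mem_image]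
    rintro p ⟨a, -, rfl⟩ ⟨b, -, h⟩; simp at h
  have hdisj2 : Disjoint (((pathFinset (i+1) j).image (SStep.up :: ·)) ∪
      ((pathFinset i (j+1)).image (SStep.left :: ·)))
      ((pathFinset i j).image (SStep.diag :: ·)) := by
    simp only [Finset.disjoint_left, Finset.mem_union, Finset.mem_image]
    rintro p (⟨a, -, rfl⟩ | ⟨a, -, rfl⟩) ⟨b, -, h⟩ <;> simp at h
  rw [Zpf, pathFinset_succ_succ, Finset.sum_union hdisj2, Finset.sum_union hdisj1,
    Finset.sum_image (fun a _ b _ h => hinj _ h),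
    Finset.sum_image (fun a _ b _ h => hinj _ h),
    Finset.sum_image (fun a _ b _ h => hinj _ h)]
  congr 1
  congr 1
  · -- up branch
    rw [Zpf, Finset.mul_sum]
    apply Finset.sum_congr rfl
    intro r hr
    rw [mem_pathFinset] at hr
    have hA0 : 0 ≤ areaOf (((i+1:ℕ) : ℤ), 0) r := areaOf_nonneg r _ 0 (by rw [hr.1])
    have hA : areaOf (((i+1:ℕ) : ℤ), 0) (SStep.up :: r)
        = ((2*(i+1) : ℕ) : ℤ) + areaOf (((i+1:ℕ) : ℤ), 0) r := by
      simp only [areaOf]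
      rw [areaOf_y_indep r _ (0+1) 0]
      push_cast; ring
    have hd : diagCount (SStep.up :: r) = diagCount r := by
      simp [diagCount, List.count_cons_of_ne (by decide : SStep.diag ≠ SStep.up)]
    simp only [hd, hA, Int.toNat_add (Int.natCast_nonneg _) hA0, Int.toNat_natCast, pow_add]
    ring
  · -- left branch
    rw [Zpf]
    apply Finset.sum_congr rfl
    intro r hr
    have hA : areaOf (((i+1:ℕ) : ℤ), 0) (SStep.left :: r) = areaOf (((i:ℕ) : ℤ), 0) r := by
      simp only [areaOf]
      norm_num
    have hd : diagCount (SStep.left :: r) = diagCount r := by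
      simp [diagCount, List.count_cons_of_ne (by decide : SStep.diag ≠ SStep.left)]
    simp only [hd, hA]
  · -- diag branch
    rw [Zpf, Finset.mul_sum]
    apply Finset.sum_congr rfl
    intro r hr
    rw [mem_pathFinset] at hr
    have hA0 : 0 ≤ areaOf (((i:ℕ) : ℤ), 0) r := areaOf_nonneg r _ 0 (by rw [hr.1])
    have hA : areaOf (((i+1:ℕ) : ℤ), 0) (SStep.diag :: r)
        = ((2*i+1 : ℕ) : ℤ) + areaOf (((i:ℕ) : ℤ), 0) r := by
      simp only [areaOf]
      rw [areaOf_y_indep r _ (0+1) 0]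
      push_cast; ring_nf
    have hd : diagCount (SStep.diag :: r) = diagCount r + 1 := by
      simp [diagCount, List.count_cons_self]
    simp only [hd, hA, Int.toNat_add (Int.natCast_nonneg _) hA0, Int.toNat_natCast, pow_add]
    ring
/-- `∏_{s=1}^j (q^{2s}-1)`. -/
noncomputable def Dq (q : ℝ) (j : ℕ) : ℝ := ∏ s ∈ Finset.Icc 1 j, (q ^ (2*s) - 1)

/-- `∏_{s=1}^j (t q^{2s}/q^{2k} - 1)`. -/
noncomputable def Nq (q t : ℝ) (j k : ℕ) : ℝ := ∏ s ∈ Finset.Icc 1 j, (t * q ^ (2*s) / q ^ (2*k) - 1)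

lemma Dq_zero (q : ℝ) : Dq q 0 = 1 := by simp [Dq]

lemma Dq_succ (q : ℝ) (j : ℕ) : Dq q (j+1) = Dq q j * (q ^ (2*(j+1)) - 1) := by
  rw [Dq, Dq, Finset.prod_Icc_succ_top (by omega)]

lemma q_pow_ne_one {q : ℝ} (hq0 : 0 < q) (hq1 : q ≠ 1) {s : ℕ} (hs : 1 ≤ s) :
    q ^ (2*s) - 1 ≠ 0 := by
  intro h
  have h' : q ^ (2*s) = 1 := by linarith
  rcases lt_trichotomy q 1 with hlt | heq | hgt
  · have := pow_lt_one₀ hq0.le hlt (by omega : 2*s ≠ 0)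
    linarith
  · exact hq1 heq
  · have := one_lt_pow₀ hgt (by omega : 2*s ≠ 0)
    linarith

lemma Dq_ne_zero {q : ℝ} (hq0 : 0 < q) (hq1 : q ≠ 1) (j : ℕ) : Dq q j ≠ 0 := by
  rw [Dq]
  exact Finset.prod_ne_zero_iff.2 fun s hs => q_pow_ne_one hq0 hq1 (Finset.mem_Icc.1 hs).1

lemma qBinom_eq (q : ℝ) (j k : ℕ) : qBinom q j k = Dq q j / (Dq q k * Dq q (j - k)) := rfl

lemma zFun_eq (γ q : ℝ) (j : ℕ) (t : ℝ) :
    zFun γ q j t = ∑ k ∈ Finset.range (j + 1),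
      γ ^ k * q ^ (k ^ 2) * qBinom q j k * (Nq q t j k / Dq q j) := by
  rw [zFun]
  apply Finset.sum_congr rfl
  intro k _
  rw [Nq, Dq, ← Finset.prod_div_distrib]

lemma Nq_zero (q t : ℝ) (k : ℕ) : Nq q t 0 k = 1 := by simp [Nq]

lemma Nq_succ_top (q t : ℝ) (j k : ℕ) :
    Nq q t (j+1) k = Nq q t j k * (t * q ^ (2*(j+1)) / q ^ (2*k) - 1) := by
  rw [Nq, Nq, Finset.prod_Icc_succ_top (by omega)]

lemma Nq_shift (q t : ℝ) (hq : q ≠ 0) (j m : ℕ) :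
    Nq q t (j+1) (m+1) = (t / q ^ (2*m) - 1) * Nq q t j m := by
  induction j with
  | zero =>
    rw [Nq_succ_top, Nq_zero, Nq_zero]
    have : t * q ^ (2*1) / q ^ (2*(m+1)) = t / q ^ (2*m) := by
      rw [show 2*(m+1) = 2*m + 2*1 by ring, pow_add]
      field_simp
    rw [this]; ring
  | succ n ih =>
    rw [Nq_succ_top, ih, Nq_succ_top]
    have : t * q ^ (2*(n+1+1)) / q ^ (2*(m+1)) = t * q ^ (2*(n+1)) / q ^ (2*m) := by
      rw [show 2*(m+1) = 2*m + 2 by ring, show 2*(n+1+1) = 2*(n+1) + 2 by ring,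
        pow_add, pow_add]
      field_simp
    rw [this]; ring

lemma Nq_scale (q t : ℝ) (hq : q ≠ 0) (j m : ℕ) :
    Nq q (q^2 * t) j (m+1) = Nq q t j m := by
  rw [Nq, Nq]
  apply Finset.prod_congr rfl
  intro s _
  have : q^2 * t * q ^ (2*s) / q ^ (2*(m+1)) = t * q ^ (2*s) / q ^ (2*m) := by
    rw [show 2*(m+1) = 2*m + 2 by ring, pow_add]
    field_simp
  rw [this]

lemma Nq_diff (q t : ℝ) (hq : q ≠ 0) (j m : ℕ) :
    Nq q t (j+1) m - Nq q t (j+1) (m+1)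
      = (t / q ^ (2*m)) * (q ^ (2*(j+1)) - 1) * Nq q t j m := by
  rw [Nq_succ_top, Nq_shift q t hq]
  have : t * q ^ (2*(j+1)) / q ^ (2*m) = (t / q ^ (2*m)) * q ^ (2*(j+1)) := by ring
  rw [this]; ring

lemma qBinom_pascal {q : ℝ} (hq0 : 0 < q) (hq1 : q ≠ 1) {j m : ℕ} (hm : m < j) :
    qBinom q (j+1) (m+1) = q ^ (2*(m+1)) * qBinom q j (m+1) + qBinom q j m := by
  obtain ⟨r, rfl⟩ : ∃ r, j = m + 1 + r := ⟨j - (m+1), by omega⟩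
  have e1 : m + 1 + r + 1 - (m + 1) = r + 1 := by omega
  have e2 : m + 1 + r - (m + 1) = r := by omega
  have e3 : m + 1 + r - m = r + 1 := by omega
  have hDm := Dq_ne_zero hq0 hq1 m
  have hDr := Dq_ne_zero hq0 hq1 r
  have hqm1 : q ^ (2*(m+1)) - 1 ≠ 0 := q_pow_ne_one hq0 hq1 (by omega)
  have hqr1 : q ^ (2*(r+1)) - 1 ≠ 0 := q_pow_ne_one hq0 hq1 (by omega)
  rw [qBinom_eq, qBinom_eq, qBinom_eq, e1, e2, e3,
    Dq_succ q (m+1+r), Dq_succ q m, Dq_succ q r,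
    show 2*(m+1+r+1) = 2*(m+1) + 2*(r+1) by ring, pow_add]
  field_simp
  ring
lemma zFun_j_zero (γ q t : ℝ) : zFun γ q 0 t = 1 := by
  simp [zFun, qBinom]

lemma zFun_at_one {q : ℝ} (hq0 : 0 < q) (hq1 : q ≠ 1) (γ : ℝ) (j : ℕ) : zFun γ q j 1 = 1 := by
  have hq : q ≠ 0 := hq0.ne'
  rw [zFun]
  rw [Finset.sum_eq_single_of_mem 0 (by simp)]
  · have h1 : ∀ s ∈ Finset.Icc 1 j, (1 * q ^ (2*s) / q ^ (2*0) - 1) / (q ^ (2*s) - 1) = 1 := by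
      intro s hs
      rw [pow_zero, one_mul, div_one]
      exact div_self (q_pow_ne_one hq0 hq1 (Finset.mem_Icc.1 hs).1)
    rw [Finset.prod_congr rfl h1, Finset.prod_const_one]
    have hDj := Dq_ne_zero hq0 hq1 j
    simp [qBinom_eq, Dq_zero, div_self hDj]
  · intro k hk hk0
    have hk1 : 1 ≤ k := Nat.one_le_iff_ne_zero.2 hk0
    have hkj : k ≤ j := by simpa using Nat.lt_succ_iff.1 (Finset.mem_range.1 hk)
    rw [Finset.prod_eq_zero (Finset.mem_Icc.2 ⟨hk1, hkj⟩ : k ∈ Finset.Icc 1 j)]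
    · ring
    · rw [one_mul, div_self (pow_ne_zero _ hq)]
      simp

lemma zrec_zero {q : ℝ} (hq0 : 0 < q) (hq1 : q ≠ 1) (γ : ℝ) (j : ℕ) (t : ℝ) :
    γ ^ 0 * q ^ (0^2) * qBinom q (j+1) 0 *
        ((Nq q (q^2*t) (j+1) 0 - Nq q t (j+1) 0) / Dq q (j+1))
      = q^2*t * (γ ^ 0 * q ^ (0^2) * qBinom q j 0 * (Nq q (q^2*t) j 0 / Dq q j)) := by
  have hq : q ≠ 0 := hq0.ne'
  have hDj := Dq_ne_zero hq0 hq1 j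
  have hqj1 : q ^ (2*(j+1)) - 1 ≠ 0 := q_pow_ne_one hq0 hq1 (by omega)
  rw [show Nq q t (j+1) 0 = Nq q (q^2*t) (j+1) (0+1) from (Nq_scale q t hq (j+1) 0).symm,
    Nq_diff q (q^2*t) hq j 0, qBinom_eq, qBinom_eq, Dq_succ]
  simp only [Nat.sub_zero, Dq_zero, pow_zero, mul_zero, Dq_succ]
  field_simp

lemma zrec_mid {q : ℝ} (hq0 : 0 < q) (hq1 : q ≠ 1) (γ : ℝ) {j m : ℕ} (hm : m < j) (t : ℝ) :
    γ ^ (m+1) * q ^ ((m+1)^2) * qBinom q (j+1) (m+1) *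
        ((Nq q (q^2*t) (j+1) (m+1) - Nq q t (j+1) (m+1)) / Dq q (j+1))
      = q^2*t * (γ ^ (m+1) * q ^ ((m+1)^2) * qBinom q j (m+1) * (Nq q (q^2*t) j (m+1) / Dq q j))
        + γ * (q*t) * (γ ^ m * q ^ (m^2) * qBinom q j m * (Nq q t j m / Dq q j)) := by
  have hq : q ≠ 0 := hq0.ne'
  have hDj := Dq_ne_zero hq0 hq1 j
  have hqj1 : q ^ (2*(j+1)) - 1 ≠ 0 := q_pow_ne_one hq0 hq1 (by omega)
  have h2m : q ^ (2*m) ≠ 0 := pow_ne_zero _ hq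
  rw [Nq_scale q t hq (j+1) m, Nq_scale q t hq j m, Nq_diff q t hq j m,
    qBinom_pascal hq0 hq1 hm, Dq_succ,
    show (m+1)^2 = m^2 + (2*m + 1) by ring, show 2*(m+1) = 2*m + 2 by ring,
    pow_add, pow_add]
  field_simp
  ring

lemma zrec_top {q : ℝ} (hq0 : 0 < q) (hq1 : q ≠ 1) (γ : ℝ) (j : ℕ) (t : ℝ) :
    γ ^ (j+1) * q ^ ((j+1)^2) * qBinom q (j+1) (j+1) *
        ((Nq q (q^2*t) (j+1) (j+1) - Nq q t (j+1) (j+1)) / Dq q (j+1))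
      = γ * (q*t) * (γ ^ j * q ^ (j^2) * qBinom q j j * (Nq q t j j / Dq q j)) := by
  have hq : q ≠ 0 := hq0.ne'
  have hDj := Dq_ne_zero hq0 hq1 j
  have hqj1 : q ^ (2*(j+1)) - 1 ≠ 0 := q_pow_ne_one hq0 hq1 (by omega)
  have h2j : q ^ (2*j) ≠ 0 := pow_ne_zero _ hq
  rw [Nq_scale q t hq (j+1) j, Nq_diff q t hq j j, qBinom_eq, qBinom_eq, Dq_succ]
  simp only [Nat.sub_self, Dq_zero]
  rw [show (j+1)^2 = j^2 + (2*j + 1) by ring, pow_add]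
  field_simp
  ring

lemma zFun_rec {q : ℝ} (hq0 : 0 < q) (hq1 : q ≠ 1) (γ : ℝ) (j : ℕ) (t : ℝ) :
    zFun γ q (j+1) (q^2*t)
      = q^2*t * zFun γ q j (q^2*t) + zFun γ q (j+1) t + γ * (q*t) * zFun γ q j t := by
  have main :
      (∑ k ∈ Finset.range (j+1+1),
          γ ^ k * q ^ (k^2) * qBinom q (j+1) k * (Nq q (q^2*t) (j+1) k / Dq q (j+1)))
        - (∑ k ∈ Finset.range (j+1+1),
          γ ^ k * q ^ (k^2) * qBinom q (j+1) k * (Nq q t (j+1) k / Dq q (j+1)))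
      = q^2*t * (∑ k ∈ Finset.range (j+1),
            γ ^ k * q ^ (k^2) * qBinom q j k * (Nq q (q^2*t) j k / Dq q j))
        + γ * (q*t) * (∑ k ∈ Finset.range (j+1),
            γ ^ k * q ^ (k^2) * qBinom q j k * (Nq q t j k / Dq q j)) := by
    rw [← Finset.sum_sub_distrib]
    have hF : ∀ k ∈ Finset.range (j+1+1),
        γ ^ k * q ^ (k^2) * qBinom q (j+1) k * (Nq q (q^2*t) (j+1) k / Dq q (j+1))
          - γ ^ k * q ^ (k^2) * qBinom q (j+1) k * (Nq q t (j+1) k / Dq q (j+1))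
        = γ ^ k * q ^ (k^2) * qBinom q (j+1) k *
            ((Nq q (q^2*t) (j+1) k - Nq q t (j+1) k) / Dq q (j+1)) := by
      intro k _; ring
    rw [Finset.sum_congr rfl hF, Finset.sum_range_succ', Finset.sum_range_succ]
    rw [Finset.mul_sum, Finset.mul_sum, Finset.sum_range_succ', Finset.sum_range_succ]
    have hmid : ∀ m ∈ Finset.range j,
        γ ^ (m+1) * q ^ ((m+1)^2) * qBinom q (j+1) (m+1) *
          ((Nq q (q^2*t) (j+1) (m+1) - Nq q t (j+1) (m+1)) / Dq q (j+1))
        = q^2*t * (γ ^ (m+1) * q ^ ((m+1)^2) * qBinom q j (m+1) * (Nq q (q^2*t) j (m+1) / Dq q j))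
          + γ * (q*t) * (γ ^ m * q ^ (m^2) * qBinom q j m * (Nq q t j m / Dq q j)) := by
      intro m hm
      exact zrec_mid hq0 hq1 γ (Finset.mem_range.1 hm) t
    rw [Finset.sum_congr rfl hmid, Finset.sum_add_distrib,
      zrec_zero hq0 hq1 γ j t, zrec_top hq0 hq1 γ j t]
    ring
  rw [zFun_eq, zFun_eq, zFun_eq, zFun_eq]
  linarith [main]
lemma Zpf_eq_zFun (γ : ℝ) {q : ℝ} (hq0 : 0 < q) (hq1 : q ≠ 1) (i j : ℕ) :
    Zpf γ q i j = zFun γ q j (q ^ (2*i)) := by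
  suffices h : ∀ n i j, i + j ≤ n → Zpf γ q i j = zFun γ q j (q ^ (2*i)) from h (i+j) i j le_rfl
  intro n
  induction n with
  | zero =>
    intro i j hij
    have hi : i = 0 := by omega
    have hj : j = 0 := by omega
    subst hi; subst hj
    rw [Zpf_right_zero, zFun_j_zero]
  | succ n ih =>
    intro i j hij
    match i, j with
    | 0, j =>
      rw [Zpf_left_zero, show 2*0 = 0 by ring, pow_zero, zFun_at_one hq0 hq1]
    | i+1, 0 => rw [Zpf_right_zero, zFun_j_zero]
    | i+1, j+1 =>
      rw [Zpf_rec, ih (i+1) j (by omega), ih i (j+1) (by omega), ih i j (by omega)]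
      have h1 : q^(2*(i+1)) = q^2 * q^(2*i) := by rw [show 2*(i+1) = 2 + 2*i by ring, pow_add]
      have h2 : q^(2*i+1) = q * q^(2*i) := by rw [show 2*i+1 = 1 + 2*i by ring, pow_add, pow_one]
      rw [h1, h2, zFun_rec hq0 hq1]

/-- The Schröder path partition function satisfies `Z_{(i,0)→(0,j)} = z_j(q^{2i})`,
where `z_j(t)` is a polynomial of degree (at most) `j` in `t`. -/
theorem schroeder_partition_function_polynomiality (γ q : ℝ) (hq0 : 0 < q) (hq1 : q ≠ 1)
    (i j : ℕ) :
    Zpf γ q i j = zFun γ q j (q ^ (2 * i)) ∧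
      ∃ P : Polynomial ℝ, P.natDegree ≤ j ∧ ∀ t : ℝ, P.eval t = zFun γ q j t := by
  constructor
  · exact Zpf_eq_zFun γ hq0 hq1 i j
  · refine ⟨∑ k ∈ Finset.range (j+1),
      Polynomial.C (γ^k * q^(k^2) * qBinom q j k) *
        ∏ s ∈ Finset.Icc 1 j,
          (Polynomial.C (q^(2*s) / q^(2*k) / (q^(2*s) - 1)) * Polynomial.X
            + Polynomial.C (-(1 / (q^(2*s) - 1)))), ?_, ?_⟩
    · apply Polynomial.natDegree_sum_le_of_forall_le
      intro k _
      refine le_trans (Polynomial.natDegree_mul_le) ?_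
      rw [Polynomial.natDegree_C, zero_add]
      refine le_trans (Polynomial.natDegree_prod_le _ _) ?_
      refine le_trans (Finset.sum_le_card_nsmul _ _ 1
        (fun s _ => Polynomial.natDegree_linear_le)) ?_
      simp [Nat.card_Icc]
    · intro t
      rw [zFun, Polynomial.eval_finset_sum]
      apply Finset.sum_congr rfl
      intro k _
      rw [Polynomial.eval_mul, Polynomial.eval_C, Polynomial.eval_prod]
      congr 1
      apply Finset.prod_congr rfl
      intro s _
      rw [Polynomial.eval_add, Polynomial.eval_mul, Polynomial.eval_C, Polynomial.eval_X,
        Polynomial.eval_C]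
      ring
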